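/- Let x be a real number with x ≥ 2 and let k be a positive integer. Define R : ℕ → ℝ → ℝ by R 0 x = x and R (j+1) x = √(2 + R j x) (real square roots), and set y = (x + √(x² − 4)) / 2. Then R k x = y^(1/2^k) + y^(−1/2^k), where real powers (Real.rpow) are used. -/

import Mathlib

open Filter Real

/-- `nyblomR j x = √(2 + √(2 + ⋯ + √(2 + x)))` with `j` square roots:
`nyblomR 0 x = x`, `nyblomR (j+1) x = √(2 + nyblomR j x)`. -/
noncomputable def nyblomR : ℕ → ℝ → ℝ
  | 0, x => x
  | j + 1, x => Real.sqrt (2 + nyblomR j x)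

lemma nyblom_aux (x : ℝ) (hx : 2 ≤ x) (k : ℕ) :
    nyblomR k x =
      ((x + Real.sqrt (x ^ 2 - 4)) / 2) ^ ((1 : ℝ) / 2 ^ k) +
        ((x + Real.sqrt (x ^ 2 - 4)) / 2) ^ (-((1 : ℝ) / 2 ^ k)) := by
  set y : ℝ := (x + Real.sqrt (x ^ 2 - 4)) / 2 with hy
  have hs : 0 ≤ Real.sqrt (x ^ 2 - 4) := Real.sqrt_nonneg _
  have hnn : (0:ℝ) ≤ x ^ 2 - 4 := by nlinarith
  have hsq : Real.sqrt (x ^ 2 - 4) ^ 2 = x ^ 2 - 4 := Real.sq_sqrt hnn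
  have hypos : 0 < y := by rw [hy]; nlinarith
  induction k with
  | zero =>
    simp only [nyblomR, pow_zero]
    rw [div_one, Real.rpow_one, Real.rpow_neg_one]
    have hinv : y⁻¹ = (x - Real.sqrt (x ^ 2 - 4)) / 2 := by
      have : y * ((x - Real.sqrt (x ^ 2 - 4)) / 2) = 1 := by
        rw [hy]; nlinarith
      field_simp [eq_inv_of_mul_eq_one_right this]
      linear_combination -2 * this
    rw [hinv, hy]; ring
  | succ k ih =>
    have hb : (1 : ℝ) / 2 ^ k = 2 * ((1:ℝ) / 2 ^ (k+1)) := by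
      rw [pow_succ]; ring
    set b : ℝ := (1:ℝ) / 2 ^ (k+1) with hbdef
    have key : (y ^ b + y ^ (-b)) ^ 2 = y ^ (2*b) + 2 + y ^ (-(2*b)) := by
      have h1 : y ^ b * y ^ b = y ^ (2*b) := by
        rw [← Real.rpow_add hypos]; ring_nf
      have h2 : y ^ (-b) * y ^ (-b) = y ^ (-(2*b)) := by
        rw [← Real.rpow_add hypos]; ring_nf
      have h3 : y ^ b * y ^ (-b) = 1 := by
        rw [← Real.rpow_add hypos]; simp
      nlinarith [h1, h2, h3]
    have hpos : 0 ≤ y ^ b + y ^ (-b) :=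
      le_of_lt (add_pos (Real.rpow_pos_of_pos hypos _) (Real.rpow_pos_of_pos hypos _))
    show Real.sqrt (2 + nyblomR k x) = _
    rw [ih, hb]
    have : 2 + (y ^ (2*b) + y ^ (-(2*b))) = (y ^ b + y ^ (-b)) ^ 2 := by
      rw [key]; ring
    rw [this, Real.sqrt_sq hpos]

/-- Nyblom (2005), first identity: for `x ≥ 2` and `k ≥ 1`, with
`y = (x + √(x² − 4))/2`, the `k`-fold nested radical `√(2 + ⋯ + √(2 + x))`
equals `y^(1/2^k) + y^(−1/2^k)`. -/
theorem nyblom_nested_radical_plus (x : ℝ) (hx : 2 ≤ x) (k : ℕ) (hk : 0 < k) :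
    nyblomR k x =
      ((x + Real.sqrt (x ^ 2 - 4)) / 2) ^ ((1 : ℝ) / 2 ^ k) +
        ((x + Real.sqrt (x ^ 2 - 4)) / 2) ^ (-(1 : ℝ) / 2 ^ k) := by
  rw [neg_div]
  exact nyblom_aux x hx k
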